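/- Let Y be a random vector in ℝ^d with E[Y] = 0 and E[Y Yᵀ] = Σ, such that Y is sub-Gaussian, i.e. for every unit vector u ∈ ℝ^d the real random variable ⟨u, Y⟩ is sub-Gaussian. Then there exists a constant B > 0 such that, with Q = Y Yᵀ − Σ, for every integer k ≥ 2 one has E[Q^k] ⪯ (1/2) k! B^k I, where I is the d×d identity matrix. -/

import Mathlib

open Matrix MeasureTheory ProbabilityTheory Finset

noncomputable section

/-- Frobenius inner product `⟨A,B⟩ = tr(Aᵀ B)`. -/
def frobInner {d : ℕ} (A B : Matrix (Fin d) (Fin d) ℝ) : ℝ := Matrix.trace (Aᵀ * B)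

/-- Frobenius norm `‖A‖_F = √⟨A,A⟩`. -/
def frobNorm {d : ℕ} (A : Matrix (Fin d) (Fin d) ℝ) : ℝ := Real.sqrt (frobInner A A)

/-- Spectral (operator) norm of a matrix, as the operator norm of the induced
linear map on Euclidean space. -/
def specNorm {d : ℕ} (A : Matrix (Fin d) (Fin d) ℝ) : ℝ :=
  ‖LinearMap.toContinuousLinearMap (Matrix.toEuclideanLin A)‖

/-- Loewner order: `A ⪯ B` iff `B - A` is positive semidefinite. -/
def loewnerLE {d : ℕ} (A B : Matrix (Fin d) (Fin d) ℝ) : Prop := (B - A).PosSemidef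

/-- Entrywise expectation of a random matrix. -/
def matExp {Ω : Type*} [MeasurableSpace Ω] (μ : Measure Ω) {d : ℕ}
    (X : Ω → Matrix (Fin d) (Fin d) ℝ) : Matrix (Fin d) (Fin d) ℝ :=
  Matrix.of fun a c => ∫ ω, X ω a c ∂μ

/-- Linear predictor `Γ_θ = ∑ⱼ θⱼ Bⱼ`. -/
def Gamma {d p : ℕ} (B : Fin p → Matrix (Fin d) (Fin d) ℝ) (θ : Fin p → ℝ) :
    Matrix (Fin d) (Fin d) ℝ := ∑ j, θ j • B j

/-- Empirical risk `ℓ(θ) = ∑ᵢ ‖Zᵢ - Γ_θ‖_F²`. -/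
def empRisk {d p n : ℕ} (B : Fin p → Matrix (Fin d) (Fin d) ℝ)
    (Z : Fin n → Matrix (Fin d) (Fin d) ℝ) (θ : Fin p → ℝ) : ℝ :=
  ∑ i, (frobNorm (Z i - Gamma B θ)) ^ 2

/-- Penalized objective `ℓ^λ(θ) = ℓ(θ) + 2λ ∑ⱼ |θⱼ|`. -/
def objective {d p n : ℕ} (B : Fin p → Matrix (Fin d) (Fin d) ℝ)
    (Z : Fin n → Matrix (Fin d) (Fin d) ℝ) (lam : ℝ) (θ : Fin p → ℝ) : ℝ :=
  empRisk B Z θ + 2 * lam * ∑ j, |θ j|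

/-- Soft-thresholding operator `ST`. -/
def softThresh (a lam : ℝ) : ℝ := if lam < a then a - lam else if a < -lam then a + lam else 0

/-- Measurable space structure on matrices (entrywise, via the Pi structure). -/
instance matrixMeasurableSpace {d : ℕ} : MeasurableSpace (Matrix (Fin d) (Fin d) ℝ) :=
  (inferInstance : MeasurableSpace (Fin d → Fin d → ℝ))


section Aux

variable {d : ℕ}

lemma frobInner_eq (A B : Matrix (Fin d) (Fin d) ℝ) :
    frobInner A B = ∑ a, ∑ c, A a c * B a c := by
  simp [frobInner, Matrix.trace, Matrix.mul_apply, Matrix.diag, Matrix.transpose_apply]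
  rw [Finset.sum_comm]

lemma frobNorm_eq (A : Matrix (Fin d) (Fin d) ℝ) :
    frobNorm A = Real.sqrt (∑ a, ∑ c, A a c ^ 2) := by
  simp [frobNorm, frobInner_eq, sq]

lemma frobNorm_nonneg (A : Matrix (Fin d) (Fin d) ℝ) : 0 ≤ frobNorm A := Real.sqrt_nonneg _

lemma frobNorm_sq (A : Matrix (Fin d) (Fin d) ℝ) :
    frobNorm A ^ 2 = ∑ a, ∑ c, A a c ^ 2 := by
  rw [frobNorm_eq, Real.sq_sqrt]
  positivity

lemma abs_entry_le_frobNorm (A : Matrix (Fin d) (Fin d) ℝ) (a c : Fin d) :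
    |A a c| ≤ frobNorm A := by
  rw [frobNorm_eq, ← Real.sqrt_sq_eq_abs]
  apply Real.sqrt_le_sqrt
  calc A a c ^ 2 ≤ ∑ c', A a c' ^ 2 :=
        Finset.single_le_sum (f := fun c' => A a c' ^ 2) (fun i _ => sq_nonneg _)
          (Finset.mem_univ c)
    _ ≤ _ := Finset.single_le_sum (f := fun a' => ∑ c', A a' c' ^ 2)
        (fun i _ => Finset.sum_nonneg fun _ _ => sq_nonneg _) (Finset.mem_univ a)

lemma frobNorm_mul_le (A B : Matrix (Fin d) (Fin d) ℝ) :
    frobNorm (A * B) ≤ frobNorm A * frobNorm B := by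
  have h1 : ∑ a, ∑ c, (A * B) a c ^ 2 ≤ (frobNorm A * frobNorm B) ^ 2 := by
    rw [mul_pow, frobNorm_sq, frobNorm_sq]
    calc ∑ a, ∑ c, (A * B) a c ^ 2
        ≤ ∑ a, ∑ c, (∑ b, A a b ^ 2) * (∑ b, B b c ^ 2) := by
          apply Finset.sum_le_sum; intro a _
          apply Finset.sum_le_sum; intro c _
          simpa [Matrix.mul_apply] using
            Finset.sum_mul_sq_le_sq_mul_sq Finset.univ (fun b => A a b) (fun b => B b c)
      _ = (∑ a, ∑ b, A a b ^ 2) * (∑ b, ∑ c, B b c ^ 2) := by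
          rw [Finset.sum_mul_sum]
          apply Finset.sum_congr rfl; intro a _
          rw [← Finset.mul_sum, ← Finset.mul_sum, Finset.sum_comm]
  rw [frobNorm_eq]
  calc Real.sqrt (∑ a, ∑ c, (A * B) a c ^ 2) ≤ Real.sqrt ((frobNorm A * frobNorm B) ^ 2) :=
        Real.sqrt_le_sqrt h1
    _ = |frobNorm A * frobNorm B| := Real.sqrt_sq_eq_abs _
    _ = frobNorm A * frobNorm B := abs_of_nonneg (mul_nonneg (frobNorm_nonneg _) (frobNorm_nonneg _))

lemma frobNorm_pow_le (A : Matrix (Fin d) (Fin d) ℝ) {k : ℕ} (hk : 1 ≤ k) :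
    frobNorm (A ^ k) ≤ frobNorm A ^ k := by
  induction k with
  | zero => omega
  | succ n ih =>
    rcases Nat.eq_or_lt_of_le hk with h | h
    · simp [← h]
    · have hn : 1 ≤ n := by omega
      calc frobNorm (A ^ (n + 1)) = frobNorm (A ^ n * A) := by rw [pow_succ]
        _ ≤ frobNorm (A ^ n) * frobNorm A := frobNorm_mul_le _ _
        _ ≤ frobNorm A ^ n * frobNorm A := by
            apply mul_le_mul_of_nonneg_right (ih hn) (frobNorm_nonneg _)
        _ = frobNorm A ^ (n + 1) := (pow_succ _ _).symm

lemma frobNorm_sub_le (A B : Matrix (Fin d) (Fin d) ℝ) :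
    frobNorm (A - B) ≤ frobNorm A + frobNorm B := by
  have key : ∀ M : Matrix (Fin d) (Fin d) ℝ,
      frobNorm M = ‖(WithLp.equiv 2 (Fin d × Fin d → ℝ)).symm (fun p => M p.1 p.2)‖ := by
    intro M
    rw [frobNorm_eq, EuclideanSpace.norm_eq]
    congr 1
    rw [Fintype.sum_prod_type]
    apply Finset.sum_congr rfl; intro a _
    apply Finset.sum_congr rfl; intro c _
    rw [Real.norm_eq_abs, sq_abs]
    rfl
  rw [key, key, key]
  have : (WithLp.equiv 2 (Fin d × Fin d → ℝ)).symm (fun p => (A - B) p.1 p.2)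
      = (WithLp.equiv 2 (Fin d × Fin d → ℝ)).symm (fun p => A p.1 p.2)
        - (WithLp.equiv 2 (Fin d × Fin d → ℝ)).symm (fun p => B p.1 p.2) := rfl
  rw [this]
  exact norm_sub_le _ _

lemma quadform_le_frobNorm (M : Matrix (Fin d) (Fin d) ℝ) (x : Fin d → ℝ) :
    ∑ a, ∑ c, x a * M a c * x c ≤ frobNorm M * ∑ a, x a ^ 2 := by
  have h1 : ∑ a, ∑ c, x a * M a c * x c
      = ∑ p : Fin d × Fin d, (x p.1 * x p.2) * M p.1 p.2 := by
    rw [Fintype.sum_prod_type]; apply Finset.sum_congr rfl; intros; apply Finset.sum_congr rfl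
    intros; ring
  have h2 : (∑ p : Fin d × Fin d, (x p.1 * x p.2) * M p.1 p.2) ^ 2
      ≤ (∑ a, x a ^ 2) ^ 2 * frobNorm M ^ 2 := by
    calc (∑ p : Fin d × Fin d, (x p.1 * x p.2) * M p.1 p.2) ^ 2
        ≤ (∑ p : Fin d × Fin d, (x p.1 * x p.2) ^ 2) * ∑ p : Fin d × Fin d, M p.1 p.2 ^ 2 :=
          Finset.sum_mul_sq_le_sq_mul_sq _ _ _
      _ = (∑ a, x a ^ 2) ^ 2 * frobNorm M ^ 2 := by
          rw [frobNorm_sq]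
          congr 1
          · rw [Fintype.sum_prod_type, sq (∑ a, x a ^ 2), Finset.sum_mul_sum]
            apply Finset.sum_congr rfl; intro a _
            apply Finset.sum_congr rfl; intro c _
            ring
          · rw [Fintype.sum_prod_type]
  rw [h1]
  calc ∑ p : Fin d × Fin d, (x p.1 * x p.2) * M p.1 p.2
      ≤ |∑ p : Fin d × Fin d, (x p.1 * x p.2) * M p.1 p.2| := le_abs_self _
    _ = Real.sqrt ((∑ p : Fin d × Fin d, (x p.1 * x p.2) * M p.1 p.2) ^ 2) :=
        (Real.sqrt_sq_eq_abs _).symm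
    _ ≤ Real.sqrt ((∑ a, x a ^ 2) ^ 2 * frobNorm M ^ 2) := Real.sqrt_le_sqrt h2
    _ = |(∑ a, x a ^ 2)| * |frobNorm M| := by
        rw [Real.sqrt_mul (sq_nonneg _), Real.sqrt_sq_eq_abs, Real.sqrt_sq_eq_abs]
    _ = frobNorm M * ∑ a, x a ^ 2 := by
        rw [abs_of_nonneg (Finset.sum_nonneg fun _ _ => sq_nonneg _),
          abs_of_nonneg (frobNorm_nonneg _), mul_comm]


end Aux

section Aux2

lemma two_mul_factorial_le (m : ℕ) :
    (((2 * m).factorial : ℝ)) ≤ (2 * m) ^ m * m.factorial := by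
  have h := Nat.choose_le_pow_div (α := ℝ) m (2 * m)
  have e : (2 * m).choose m * m.factorial * (2 * m - m).factorial = (2 * m).factorial :=
    Nat.choose_mul_factorial_mul_factorial (by omega)
  have e2 : 2 * m - m = m := by omega
  rw [e2] at e
  have hf : (0:ℝ) < m.factorial := by positivity
  have := mul_le_mul_of_nonneg_right h (le_of_lt (mul_pos hf hf))
  calc ((2 * m).factorial : ℝ) = (2 * m).choose m * m.factorial * m.factorial := by
        exact_mod_cast e.symm
    _ = ((2 * m).choose m : ℝ) * (m.factorial * m.factorial) := by ring
    _ ≤ ((2 * m : ℕ) ^ m / m.factorial) * (m.factorial * m.factorial) := this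
    _ = (2 * m) ^ m * m.factorial := by field_simp; push_cast; ring

lemma pow_le_factorial_mul_exp {t : ℝ} (ht : 0 ≤ t) (m : ℕ) :
    t ^ m ≤ m.factorial * Real.exp t := by
  have h1 : t ^ m / m.factorial ≤ Real.exp t := by
    calc t ^ m / m.factorial ≤ ∑ i ∈ Finset.range (m + 1), t ^ i / i.factorial := by
          apply Finset.single_le_sum (f := fun i => t ^ i / (i.factorial : ℝ))
            (fun i _ => by positivity) (Finset.self_mem_range_succ m)
      _ ≤ Real.exp t := Real.sum_le_exp_of_nonneg ht _
  have hf : (0:ℝ) < m.factorial := by positivity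
  calc t ^ m = m.factorial * (t ^ m / m.factorial) := by field_simp
    _ ≤ m.factorial * Real.exp t := by
        exact mul_le_mul_of_nonneg_left h1 (le_of_lt hf)

lemma exp_abs_le (x : ℝ) : Real.exp |x| ≤ Real.exp x + Real.exp (-x) := by
  rcases le_total 0 x with h | h
  · rw [abs_of_nonneg h]; nlinarith [Real.exp_pos (-x)]
  · rw [abs_of_nonpos h]; nlinarith [Real.exp_pos x]

lemma abs_pow_le_exp (x : ℝ) (m : ℕ) :
    |x| ^ m ≤ m.factorial * (Real.exp x + Real.exp (-x)) := by
  calc |x| ^ m ≤ m.factorial * Real.exp |x| := pow_le_factorial_mul_exp (abs_nonneg x) m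
    _ ≤ m.factorial * (Real.exp x + Real.exp (-x)) := by
        apply mul_le_mul_of_nonneg_left (exp_abs_le x) (by positivity)

lemma meas_pow_entry {d : ℕ} {Ω : Type*} [MeasurableSpace Ω]
    (M : Ω → Matrix (Fin d) (Fin d) ℝ) (h : ∀ a c, Measurable fun ω => M ω a c) (k : ℕ)
    (a c : Fin d) : Measurable fun ω => (M ω ^ k) a c := by
  induction k generalizing a c with
  | zero => simp only [pow_zero, Matrix.one_apply]; exact measurable_const
  | succ n ih =>
    simp only [pow_succ, Matrix.mul_apply]
    exact Finset.measurable_sum _ fun b _ => (ih a b).mul (h b c)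


end Aux2

lemma loewner_of_quadform {d : ℕ} (E : Matrix (Fin d) (Fin d) ℝ) (r : ℝ)
    (hsym : ∀ a c, E c a = E a c)
    (hbound : ∀ x : Fin d → ℝ, ∑ a, ∑ c, x a * E a c * x c ≤ r * ∑ a, x a ^ 2) :
    loewnerLE E (r • (1 : Matrix (Fin d) (Fin d) ℝ)) := by
  have hE' : Eᴴ = E := by
    apply Matrix.ext; intro i j
    simp only [Matrix.conjTranspose_apply, star_trivial]
    exact hsym i j
  rw [loewnerLE, Matrix.posSemidef_iff_dotProduct_mulVec]
  constructor
  · show (r • (1 : Matrix (Fin d) (Fin d) ℝ) - E)ᴴ = _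
    rw [Matrix.conjTranspose_sub, Matrix.conjTranspose_smul, Matrix.conjTranspose_one, hE',
      star_trivial]
  · intro x
    have hsx : star x = x := funext fun i => rfl
    rw [hsx, Matrix.sub_mulVec, dotProduct_sub]
    have h1 : x ⬝ᵥ ((r • (1 : Matrix (Fin d) (Fin d) ℝ)) *ᵥ x) = r * ∑ a, x a ^ 2 := by
      rw [Matrix.smul_mulVec, Matrix.one_mulVec, dotProduct_smul, smul_eq_mul]
      congr 1
      rw [dotProduct]
      exact Finset.sum_congr rfl fun a _ => (sq (x a)).symm
    have h2 : x ⬝ᵥ (E *ᵥ x) = ∑ a, ∑ c, x a * E a c * x c := by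
      rw [dotProduct]
      apply Finset.sum_congr rfl; intro a _
      rw [Matrix.mulVec, dotProduct, Finset.mul_sum]
      exact Finset.sum_congr rfl fun c _ => by ring
    rw [h1, h2]
    have := hbound x
    linarith


set_option maxHeartbeats 2000000 in
/-- if `Y` is a zero-mean sub-Gaussian random vector with
`E[YYᵀ] = Σ`, then `Q = YYᵀ − Σ` satisfies `E[Q^k] ⪯ (1/2) k! B^k I` for all
`k ≥ 2`, for some constant `B > 0`. -/
theorem stmt_12 {Ω : Type*} [MeasurableSpace Ω] (μ : Measure Ω) [IsProbabilityMeasure μ]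
    {d : ℕ} (Y : Ω → Fin d → ℝ) (hmeas : Measurable Y)
    (hsub : ∀ v : Fin d → ℝ, (∑ j, v j ^ 2) = 1 →
      ∃ c > 0, ∀ s : ℝ,
        Integrable (fun ω => Real.exp (s * ∑ j, v j * Y ω j)) μ ∧
        (∫ ω, Real.exp (s * ∑ j, v j * Y ω j) ∂μ) ≤ Real.exp (c * s ^ 2 / 2))
    (hintmean : ∀ j, Integrable (fun ω => Y ω j) μ)
    (hmean : ∀ j, (∫ ω, Y ω j ∂μ) = 0)
    (Sig : Matrix (Fin d) (Fin d) ℝ)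
    (hSig : matExp μ (fun ω => Matrix.of fun a c => Y ω a * Y ω c) = Sig) :
    ∃ B > (0 : ℝ), ∀ k : ℕ, 2 ≤ k →
      loewnerLE
        (matExp μ (fun ω => (Matrix.of (fun a c => Y ω a * Y ω c) - Sig) ^ k))
        (((k.factorial : ℝ) / 2 * B ^ k) • (1 : Matrix (Fin d) (Fin d) ℝ)) := by
  classical
  have hYm : ∀ j, Measurable fun ω => Y ω j := fun j => (measurable_pi_apply j).comp hmeas
  have H : ∀ j : Fin d, ∃ c, 0 < c ∧ ∀ s : ℝ,
      Integrable (fun ω => Real.exp (s * Y ω j)) μ ∧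
      (∫ ω, Real.exp (s * Y ω j) ∂μ) ≤ Real.exp (c * s ^ 2 / 2) := by
    intro j
    obtain ⟨c, hc, hP⟩ := hsub (fun i => if i = j then 1 else 0) (by simp)
    refine ⟨c, hc, fun s => ?_⟩
    have h := hP s
    simpa using h
  choose cf hcf hMGF using H
  have hexp_int : ∀ (j : Fin d) (s : ℝ), Integrable (fun ω => Real.exp (s * Y ω j)) μ :=
    fun j s => (hMGF j s).1
  have habs_int : ∀ (j : Fin d) (m : ℕ), Integrable (fun ω => |Y ω j| ^ m) μ := by
    intro j m
    have h1 : Integrable (fun ω => Real.exp (Y ω j)) μ := by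
      simpa using hexp_int j 1
    have h2 : Integrable (fun ω => Real.exp (-Y ω j)) μ := by
      have h := hexp_int j (-1)
      simpa using h
    apply Integrable.mono' ((h1.add h2).const_mul (m.factorial : ℝ))
      ((hYm j).abs.pow_const m).aestronglyMeasurable
    filter_upwards with ω
    rw [Real.norm_eq_abs, abs_of_nonneg (by positivity)]
    exact abs_pow_le_exp _ m
  have heven_int : ∀ (j : Fin d) (m : ℕ), Integrable (fun ω => Y ω j ^ (2 * m)) μ := by
    intro j m
    refine (habs_int j (2 * m)).congr (Filter.Eventually.of_forall fun ω => ?_)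
    show |Y ω j| ^ (2 * m) = Y ω j ^ (2 * m)
    rw [pow_mul, pow_mul, sq_abs]
  have hmom : ∀ (j : Fin d) (m : ℕ), 1 ≤ m →
      (∫ ω, Y ω j ^ (2 * m) ∂μ) ≤ 2 * m.factorial * (2 * Real.exp (cf j / 2)) ^ m := by
    intro j m hm
    set s : ℝ := Real.sqrt m with hs
    have hm0 : (0:ℝ) < m := by exact_mod_cast hm
    have hs2 : s ^ 2 = m := Real.sq_sqrt (le_of_lt hm0)
    have hspos : 0 < s := Real.sqrt_pos.mpr hm0
    have hpt : ∀ ω, s ^ (2*m) * Y ω j ^ (2*m)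
        ≤ (2*m).factorial * (Real.exp (s * Y ω j) + Real.exp (-s * Y ω j)) := by
      intro ω
      have h := abs_pow_le_exp (s * Y ω j) (2*m)
      have e : |s * Y ω j| ^ (2*m) = s ^ (2*m) * Y ω j ^ (2*m) := by
        rw [abs_mul, mul_pow, abs_of_pos hspos]
        congr 1
        rw [pow_mul, pow_mul, sq_abs]
      rw [e] at h
      simpa [neg_mul] using h
    have hint1 : Integrable (fun ω => s ^ (2*m) * Y ω j ^ (2*m)) μ :=
      (heven_int j m).const_mul _
    have hint2 : Integrable
        (fun ω => ((2*m).factorial : ℝ) * (Real.exp (s * Y ω j) + Real.exp (-s * Y ω j))) μ :=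
      ((hexp_int j s).add (hexp_int j (-s))).const_mul _
    have hI := integral_mono hint1 hint2 hpt
    rw [integral_const_mul, integral_const_mul,
      integral_add (hexp_int j s) (hexp_int j (-s))] at hI
    have hsum : (∫ ω, Real.exp (s * Y ω j) ∂μ) + (∫ ω, Real.exp (-s * Y ω j) ∂μ)
        ≤ 2 * Real.exp (cf j * m / 2) := by
      have hmgf1 := (hMGF j s).2
      have hmgf2 := (hMGF j (-s)).2
      have e2 : cf j * (-s) ^ 2 / 2 = cf j * m / 2 := by rw [neg_sq, hs2]
      have e1 : cf j * s ^ 2 / 2 = cf j * m / 2 := by rw [hs2]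
      rw [e1] at hmgf1
      rw [e2] at hmgf2
      linarith
    have hs2m : s ^ (2*m) = (m:ℝ) ^ m := by rw [pow_mul, hs2]
    have hexpm : Real.exp (cf j * m / 2) = Real.exp (cf j / 2) ^ m := by
      rw [← Real.exp_nat_mul]; congr 1; ring
    have hmain : (m:ℝ)^m * (∫ ω, Y ω j ^ (2*m) ∂μ)
        ≤ ((2*m).factorial : ℝ) * (2 * Real.exp (cf j / 2) ^ m) := by
      rw [← hs2m, ← hexpm]
      calc s^(2*m) * (∫ ω, Y ω j ^ (2*m) ∂μ)
          ≤ ((2*m).factorial : ℝ) *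
            ((∫ ω, Real.exp (s * Y ω j) ∂μ) + (∫ ω, Real.exp (-s * Y ω j) ∂μ)) := hI
        _ ≤ ((2*m).factorial : ℝ) * (2 * Real.exp (cf j * m / 2)) :=
            mul_le_mul_of_nonneg_left hsum (by positivity)
    have hfac2 : ((2*m).factorial : ℝ) ≤ 2^m * (m:ℝ)^m * m.factorial := by
      calc ((2*m).factorial : ℝ) ≤ (2 * (m:ℝ)) ^ m * m.factorial := two_mul_factorial_le m
        _ = 2^m * (m:ℝ)^m * m.factorial := by rw [mul_pow]
    have hmm : (0:ℝ) < (m:ℝ)^m := by positivity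
    have hfinal : (m:ℝ)^m * (∫ ω, Y ω j ^ (2*m) ∂μ)
        ≤ (m:ℝ)^m * (2 * m.factorial * (2 * Real.exp (cf j / 2)) ^ m) := by
      calc (m:ℝ)^m * (∫ ω, Y ω j ^ (2*m) ∂μ)
          ≤ ((2*m).factorial : ℝ) * (2 * Real.exp (cf j / 2) ^ m) := hmain
        _ ≤ (2^m * (m:ℝ)^m * m.factorial) * (2 * Real.exp (cf j / 2) ^ m) :=
            mul_le_mul_of_nonneg_right hfac2 (by positivity)
        _ = (m:ℝ)^m * (2 * m.factorial * (2 * Real.exp (cf j / 2)) ^ m) := by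
            rw [mul_pow]; ring
    exact le_of_mul_le_mul_left hfinal hmm
  -- constants
  set C : ℝ := 1 + ∑ j, 2 * Real.exp (cf j / 2) with hCdef
  have hsum_nonneg : (0:ℝ) ≤ ∑ j, 2 * Real.exp (cf j / 2) :=
    Finset.sum_nonneg fun j _ => by positivity
  have hC1 : (1:ℝ) ≤ C := by rw [hCdef]; linarith
  have hCpos : (0:ℝ) < C := lt_of_lt_of_le one_pos hC1
  have hCj : ∀ j, 2 * Real.exp (cf j / 2) ≤ C := by
    intro j
    have h1 : 2 * Real.exp (cf j / 2) ≤ ∑ i, 2 * Real.exp (cf i / 2) :=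
      Finset.single_le_sum (f := fun i => 2 * Real.exp (cf i / 2))
        (fun i _ => by positivity) (Finset.mem_univ j)
    rw [hCdef]; linarith
  set S : ℝ := frobNorm Sig with hSdef
  have hS0 : (0:ℝ) ≤ S := frobNorm_nonneg _
  set N : Ω → ℝ := fun ω => ∑ i, Y ω i ^ 2 with hNdef
  have hN0 : ∀ ω, 0 ≤ N ω := fun ω => Finset.sum_nonneg fun i _ => sq_nonneg _
  have hNmeas : Measurable N := by
    apply Finset.measurable_sum
    intro i _
    exact (hYm i).pow_const 2
  set T : ℝ := (d:ℝ) * C + S + 1 with hTdef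
  have hdC0 : (0:ℝ) ≤ (d:ℝ) * C := by positivity
  have hT1 : (1:ℝ) ≤ T := by rw [hTdef]; linarith
  have hTpos : (0:ℝ) < T := lt_of_lt_of_le one_pos hT1
  have hdCT : (d:ℝ) * C ≤ T := by rw [hTdef]; linarith
  have hST : S ≤ T := by rw [hTdef]; linarith
  refine ⟨8 * T, by positivity, ?_⟩
  intro k hk
  have hk1 : 1 ≤ k := le_trans one_le_two hk
  obtain ⟨n, rfl⟩ : ∃ n, k = n + 1 := ⟨k - 1, by omega⟩
  set k := n + 1 with hkdef
  set Q : Ω → Matrix (Fin d) (Fin d) ℝ :=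
    fun ω => Matrix.of (fun a c => Y ω a * Y ω c) - Sig with hQdef
  have hSig_entry : ∀ a c, Sig a c = ∫ ω, Y ω a * Y ω c ∂μ := by
    intro a c; rw [← hSig]; rfl
  have hSig_symm : ∀ a c, Sig c a = Sig a c := by
    intro a c
    rw [hSig_entry, hSig_entry]
    congr 1
    funext ω; ring
  have hQsym : ∀ ω, (Q ω)ᵀ = Q ω := by
    intro ω
    apply Matrix.ext; intro a c
    simp only [hQdef, Matrix.transpose_apply, Matrix.sub_apply, Matrix.of_apply]
    rw [hSig_symm, mul_comm]
  have hQksym : ∀ ω, (Q ω ^ k)ᵀ = Q ω ^ k := by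
    intro ω
    rw [Matrix.transpose_pow, hQsym]
  have hQfrob : ∀ ω, frobNorm (Q ω) ≤ N ω + S := by
    intro ω
    have h2 : N ω * N ω = ∑ a, ∑ c,
        ((Matrix.of fun a c => Y ω a * Y ω c : Matrix (Fin d) (Fin d) ℝ) a c) ^ 2 := by
      simp only [hNdef, Matrix.of_apply]
      rw [Finset.sum_mul_sum]
      exact Finset.sum_congr rfl fun a _ => Finset.sum_congr rfl fun c _ => by ring
    have h1 : frobNorm (Matrix.of fun a c => Y ω a * Y ω c : Matrix (Fin d) (Fin d) ℝ)
        = N ω := by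
      rw [frobNorm_eq, ← h2, Real.sqrt_mul_self (hN0 ω)]
    calc frobNorm (Q ω)
        ≤ frobNorm (Matrix.of fun a c => Y ω a * Y ω c : Matrix (Fin d) (Fin d) ℝ)
          + frobNorm Sig := frobNorm_sub_le _ _
      _ = N ω + S := by rw [h1, hSdef]
  -- integral bound for N ^ k
  have hNk_pt : ∀ ω, N ω ^ k ≤ (d:ℝ)^n * ∑ j, Y ω j ^ (2*k) := by
    intro ω
    rcases Nat.eq_zero_or_pos d with hd | hd
    · subst hd
      have hzero : N ω = 0 := by simp [hNdef]
      rw [hzero, zero_pow (by omega : k ≠ 0)]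
      simp
    · have h := pow_sum_div_card_le_sum_pow (s := (Finset.univ : Finset (Fin d)))
        (f := fun i => Y ω i ^ 2) (fun i _ => sq_nonneg _) n
      rw [Finset.card_univ, Fintype.card_fin] at h
      have hd' : (0:ℝ) < (d:ℝ)^n := by positivity
      rw [div_le_iff₀ hd'] at h
      calc N ω ^ k = (∑ i, Y ω i ^ 2) ^ (n+1) := by rw [hNdef]
        _ ≤ (∑ i, (Y ω i ^ 2) ^ (n+1)) * (d:ℝ)^n := h
        _ = (d:ℝ)^n * ∑ j, Y ω j ^ (2*k) := by
            rw [mul_comm]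
            congr 1
            exact Finset.sum_congr rfl fun i _ => by rw [← pow_mul]
  have hsum_int : Integrable (fun ω => ∑ j, Y ω j ^ (2*k)) μ :=
    integrable_finset_sum _ fun j _ => heven_int j k
  have hNk_int : Integrable (fun ω => N ω ^ k) μ := by
    apply Integrable.mono' (hsum_int.const_mul ((d:ℝ)^n))
      ((hNmeas.pow_const k).aestronglyMeasurable)
    filter_upwards with ω
    rw [Real.norm_eq_abs, abs_of_nonneg (pow_nonneg (hN0 ω) k)]
    exact hNk_pt ω
  have hNk_bound : (∫ ω, N ω ^ k ∂μ) ≤ 2 * k.factorial * ((d:ℝ) * C)^k := by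
    have h1 : (∫ ω, N ω ^ k ∂μ) ≤ ∫ ω, (d:ℝ)^n * ∑ j, Y ω j ^ (2*k) ∂μ :=
      integral_mono hNk_int (hsum_int.const_mul _) hNk_pt
    rw [integral_const_mul, integral_finset_sum _ (fun j _ => heven_int j k)] at h1
    have h2 : ∑ j, ∫ ω, Y ω j ^ (2*k) ∂μ ≤ ∑ _j : Fin d, 2 * k.factorial * C ^ k := by
      apply Finset.sum_le_sum
      intro j _
      calc ∫ ω, Y ω j ^ (2*k) ∂μ
          ≤ 2 * k.factorial * (2 * Real.exp (cf j / 2))^k := hmom j k hk1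
        _ ≤ 2 * k.factorial * C ^ k :=
            mul_le_mul_of_nonneg_left (pow_le_pow_left₀ (by positivity) (hCj j) k)
              (by positivity)
    have h3 : (∑ _j : Fin d, 2 * (k.factorial:ℝ) * C ^ k)
        = (d:ℝ) * (2 * k.factorial * C ^ k) := by
      rw [Finset.sum_const, Finset.card_univ, Fintype.card_fin, nsmul_eq_mul]
    calc (∫ ω, N ω ^ k ∂μ) ≤ (d:ℝ)^n * ∑ j, ∫ ω, Y ω j ^ (2*k) ∂μ := h1
      _ ≤ (d:ℝ)^n * ∑ _j : Fin d, 2 * k.factorial * C ^ k :=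
          mul_le_mul_of_nonneg_left h2 (by positivity)
      _ = 2 * k.factorial * ((d:ℝ)^k * C^k) := by rw [h3, hkdef]; push_cast; ring
      _ = 2 * k.factorial * ((d:ℝ) * C)^k := by rw [mul_pow]
  -- the dominating function (N + S) ^ k
  have hg_pt : ∀ ω, (N ω + S)^k ≤ 2^k * N ω ^ k + 2^k * S^k := by
    intro ω
    have h1 : N ω + S ≤ 2 * max (N ω) S := by
      rcases le_total (N ω) S with h | h
      · rw [max_eq_right h]; linarith
      · rw [max_eq_left h]; linarith
    calc (N ω + S)^k ≤ (2 * max (N ω) S)^k :=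
          pow_le_pow_left₀ (add_nonneg (hN0 ω) hS0) h1 k
      _ = 2^k * (max (N ω) S)^k := mul_pow _ _ _
      _ ≤ 2^k * (N ω ^ k + S^k) := by
          apply mul_le_mul_of_nonneg_left _ (by positivity)
          rcases le_total (N ω) S with h | h
          · rw [max_eq_right h]
            have := pow_nonneg (hN0 ω) k
            linarith
          · rw [max_eq_left h]
            have := pow_nonneg hS0 k
            linarith
      _ = 2^k * N ω ^ k + 2^k * S^k := by ring
  have hg_meas : Measurable (fun ω => (N ω + S)^k) := (hNmeas.add_const S).pow_const k
  have hg_int : Integrable (fun ω => (N ω + S)^k) μ := by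
    apply Integrable.mono' ((hNk_int.const_mul (2^k)).add (integrable_const (2^k * S^k)))
      hg_meas.aestronglyMeasurable
    filter_upwards with ω
    rw [Real.norm_eq_abs, abs_of_nonneg (pow_nonneg (add_nonneg (hN0 ω) hS0) k)]
    exact hg_pt ω
  have hg_bound : (∫ ω, (N ω + S)^k ∂μ) ≤ (k.factorial : ℝ)/2 * (8*T)^k := by
    have h1 : (∫ ω, (N ω + S)^k ∂μ) ≤ 2^k * (∫ ω, N ω ^ k ∂μ) + 2^k * S^k := by
      calc (∫ ω, (N ω + S)^k ∂μ) ≤ ∫ ω, (2^k * N ω ^ k + 2^k * S^k) ∂μ :=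
            integral_mono hg_int ((hNk_int.const_mul _).add (integrable_const _)) hg_pt
        _ = 2^k * (∫ ω, N ω ^ k ∂μ) + 2^k * S^k := by
            rw [integral_add (hNk_int.const_mul _) (integrable_const _),
              integral_const_mul, integral_const]
            simp [measure_univ]
    have hF1 : (1:ℝ) ≤ k.factorial := by exact_mod_cast Nat.factorial_pos k
    have hu0 : (0:ℝ) ≤ (2*T)^k := by positivity
    have h2dC : ((2:ℝ) * ((d:ℝ)*C))^k ≤ (2*T)^k :=
      pow_le_pow_left₀ (by positivity) (by linarith) k
    have h2S : ((2:ℝ) * S)^k ≤ (2*T)^k :=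
      pow_le_pow_left₀ (by positivity) (by linarith) k
    have h16 : (16:ℝ) ≤ 4^k := by
      calc (16:ℝ) = 4^2 := by norm_num
        _ ≤ 4^k := pow_le_pow_right₀ (by norm_num) hk
    have e1 : (2:ℝ)^k * (2 * k.factorial * ((d:ℝ)*C)^k) = 2 * k.factorial * (2*((d:ℝ)*C))^k := by
      rw [mul_pow 2 ((d:ℝ)*C) k]; ring
    have e2 : (2:ℝ)^k * S^k = (2*S)^k := by rw [mul_pow]
    have e3 : ((8:ℝ)*T)^k = 4^k * (2*T)^k := by
      have e4 : (4:ℝ) * (2*T) = 8*T := by ring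
      rw [← mul_pow, e4]
    have hNkb := hNk_bound
    have hfac0 : (0:ℝ) ≤ (k.factorial : ℝ) := by positivity
    calc (∫ ω, (N ω + S)^k ∂μ) ≤ 2^k * (∫ ω, N ω ^ k ∂μ) + 2^k * S^k := h1
      _ ≤ 2^k * (2 * k.factorial * ((d:ℝ)*C)^k) + 2^k * S^k := by
          have h2k : (0:ℝ) ≤ 2^k := by positivity
          exact add_le_add (mul_le_mul_of_nonneg_left hNkb h2k) le_rfl
      _ = 2 * k.factorial * (2*((d:ℝ)*C))^k + (2*S)^k := by rw [e1, e2]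
      _ ≤ 2 * k.factorial * (2*T)^k + (2*T)^k :=
          add_le_add (mul_le_mul_of_nonneg_left h2dC (by positivity)) h2S
      _ ≤ (k.factorial : ℝ)/2 * (4^k * (2*T)^k) := by
          have hu1 : (1:ℝ) * (2*T)^k ≤ (k.factorial:ℝ) * (2*T)^k :=
            mul_le_mul_of_nonneg_right hF1 hu0
          have hu2 : (k.factorial:ℝ)/2 * (16*(2*T)^k) ≤ (k.factorial:ℝ)/2 * (4^k * (2*T)^k) :=
            mul_le_mul_of_nonneg_left (mul_le_mul_of_nonneg_right h16 hu0) (by positivity)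
          nlinarith
      _ = (k.factorial : ℝ)/2 * (8*T)^k := by rw [e3]
  -- entries of Q ^ k
  have hQmeas : ∀ a c, Measurable fun ω => Q ω a c := by
    intro a c
    have e : (fun ω => Q ω a c) = fun ω => Y ω a * Y ω c - Sig a c := by
      funext ω
      simp [hQdef, Matrix.sub_apply]
    rw [e]
    exact ((hYm a).mul (hYm c)).sub measurable_const
  have hQk_meas : ∀ a c, Measurable fun ω => (Q ω ^ k) a c := meas_pow_entry Q hQmeas k
  have hQk_pt : ∀ ω (a c : Fin d), |(Q ω ^ k) a c| ≤ (N ω + S)^k := by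
    intro ω a c
    calc |(Q ω ^ k) a c| ≤ frobNorm (Q ω ^ k) := abs_entry_le_frobNorm _ a c
      _ ≤ frobNorm (Q ω) ^ k := frobNorm_pow_le _ hk1
      _ ≤ (N ω + S)^k := pow_le_pow_left₀ (frobNorm_nonneg _) (hQfrob ω) k
  have hQk_int : ∀ a c, Integrable (fun ω => (Q ω ^ k) a c) μ := by
    intro a c
    apply Integrable.mono' hg_int (hQk_meas a c).aestronglyMeasurable
    filter_upwards with ω
    rw [Real.norm_eq_abs]
    exact hQk_pt ω a c
  -- assemble
  set EE := matExp μ (fun ω => ((Matrix.of fun a c => Y ω a * Y ω c) - Sig) ^ k) with hEE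
  have hEentry : ∀ a c, EE a c = ∫ ω, (Q ω ^ k) a c ∂μ := by
    intro a c
    rw [hEE]
    rfl
  have hsymE : ∀ a c, EE c a = EE a c := by
    intro a c
    rw [hEentry, hEentry]
    congr 1
    funext ω
    calc (Q ω ^ k) c a = ((Q ω ^ k)ᵀ) a c := rfl
      _ = (Q ω ^ k) a c := by rw [hQksym]
  have hquad : ∀ x : Fin d → ℝ, ∑ a, ∑ c, x a * EE a c * x c
      ≤ ((k.factorial:ℝ)/2 * (8*T)^k) * ∑ a, x a ^ 2 := by
    intro x
    have hx2 : (0:ℝ) ≤ ∑ a, x a ^ 2 := Finset.sum_nonneg fun a _ => sq_nonneg _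
    have hint_inner : ∀ a : Fin d, ∀ c : Fin d,
        Integrable (fun ω => x a * (Q ω ^ k) a c * x c) μ :=
      fun a c => ((hQk_int a c).const_mul (x a)).mul_const (x c)
    have hint_row : ∀ a : Fin d,
        Integrable (fun ω => ∑ c, x a * (Q ω ^ k) a c * x c) μ :=
      fun a => integrable_finset_sum _ fun c _ => hint_inner a c
    have hswap : ∑ a, ∑ c, x a * EE a c * x c
        = ∫ ω, ∑ a, ∑ c, x a * (Q ω ^ k) a c * x c ∂μ := by
      rw [integral_finset_sum _ (fun a _ => hint_row a)]
      apply Finset.sum_congr rfl; intro a _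
      rw [integral_finset_sum _ (fun c _ => hint_inner a c)]
      apply Finset.sum_congr rfl; intro c _
      rw [hEentry a c]
      have e : (fun ω => x a * (Q ω ^ k) a c * x c)
          = fun ω => (x a * x c) * (Q ω ^ k) a c := funext fun ω => by ring
      rw [e, integral_const_mul]
      ring
    have hptx : ∀ ω, ∑ a, ∑ c, x a * (Q ω ^ k) a c * x c ≤ (N ω + S)^k * ∑ a, x a ^ 2 := by
      intro ω
      calc ∑ a, ∑ c, x a * (Q ω ^ k) a c * x c
          ≤ frobNorm (Q ω ^ k) * ∑ a, x a ^ 2 := quadform_le_frobNorm _ x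
        _ ≤ (N ω + S)^k * ∑ a, x a ^ 2 := by
            apply mul_le_mul_of_nonneg_right _ hx2
            calc frobNorm (Q ω ^ k) ≤ frobNorm (Q ω) ^ k := frobNorm_pow_le _ hk1
              _ ≤ (N ω + S)^k := pow_le_pow_left₀ (frobNorm_nonneg _) (hQfrob ω) k
    have hint_lhs : Integrable (fun ω => ∑ a, ∑ c, x a * (Q ω ^ k) a c * x c) μ :=
      integrable_finset_sum _ fun a _ => hint_row a
    rw [hswap]
    calc (∫ ω, ∑ a, ∑ c, x a * (Q ω ^ k) a c * x c ∂μ)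
        ≤ ∫ ω, (N ω + S)^k * ∑ a, x a ^ 2 ∂μ :=
          integral_mono hint_lhs (hg_int.mul_const _) hptx
      _ = (∫ ω, (N ω + S)^k ∂μ) * ∑ a, x a ^ 2 := integral_mul_const _ _
      _ ≤ ((k.factorial:ℝ)/2 * (8*T)^k) * ∑ a, x a ^ 2 :=
          mul_le_mul_of_nonneg_right hg_bound hx2
  exact loewner_of_quadform EE _ hsymE hquad
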